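/- Let s and N be positive integers and let ζ_0 ∈ ℂ be a primitive s-th root of unity. Then for every non-negative integer m, Σ ∏_{j=1}^{s} C(N, k_j) · ζ_0^{j·k_j}, where the sum ranges over all s-tuples (k_1, …, k_s) of non-negative integers with k_1 + ⋯ + k_s = m, equals (-1)^{(s+1)·(m/s)} · C(N, m/s) if s divides m, and equals 0 otherwise. -/

import Mathlib

open Finset Polynomial

-- L1: coefficient of a product over Fin k
lemma coeff_prod_tuple : ∀ (k : ℕ) (p : Fin k → Polynomial ℂ) (n : ℕ),
    (∏ j, p j).coeff n = ∑ x ∈ Finset.Nat.antidiagonalTuple k n, ∏ j, (p j).coeff (x j) := by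
  intro k
  induction k with
  | zero =>
    intro p n
    cases n with
    | zero => simp
    | succ n => simp [Polynomial.coeff_one]
  | succ k ih =>
    intro p n
    rw [Fin.prod_univ_succ, Polynomial.coeff_mul]
    have key : ∀ ab : ℕ × ℕ, (p 0).coeff ab.1 * (∏ j : Fin k, p j.succ).coeff ab.2
        = ∑ y ∈ Finset.Nat.antidiagonalTuple k ab.2,
            ∏ j : Fin (k+1), (p j).coeff ((Fin.cons ab.1 y : Fin (k+1) → ℕ) j) := by
      intro ab
      rw [ih, Finset.mul_sum]
      refine Finset.sum_congr rfl fun y _ => ?_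
      rw [Fin.prod_univ_succ]
      simp [Fin.cons_zero, Fin.cons_succ]
    simp_rw [key]
    rw [Finset.sum_sigma']
    refine Finset.sum_nbij' (fun z => Fin.cons z.1.1 z.2)
      (fun x => ⟨(x 0, ∑ j : Fin k, x j.succ), Fin.tail x⟩) ?_ ?_ ?_ ?_ ?_
    · rintro ⟨ab, y⟩ hz
      simp only [Finset.mem_sigma, Finset.Nat.mem_antidiagonalTuple,
        Finset.HasAntidiagonal.mem_antidiagonal] at hz ⊢
      rw [Fin.sum_univ_succ]
      simp only [Fin.cons_zero, Fin.cons_succ]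
      rw [hz.2, hz.1]
    · intro x hx
      simp only [Finset.mem_sigma, Finset.Nat.mem_antidiagonalTuple,
        Finset.HasAntidiagonal.mem_antidiagonal] at hx ⊢
      constructor
      · rw [← hx, Fin.sum_univ_succ]
      · rfl
    · rintro ⟨ab, y⟩ hz
      simp only [Finset.mem_sigma, Finset.Nat.mem_antidiagonalTuple,
        Finset.HasAntidiagonal.mem_antidiagonal] at hz
      refine Sigma.ext ?_ ?_
      · have h2 : ∑ j : Fin k, Fin.cons (α := fun _ => ℕ) ab.1 y j.succ = ab.2 := by
          simp only [Fin.cons_succ]; exact hz.2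
        simp [h2, hz.2]
      · simp [Fin.tail_cons]
    · intro x hx
      exact Fin.cons_self_tail x
    · rintro ⟨ab, y⟩ hz
      rfl

-- shift lemma
lemma prod_range_shift {M : Type*} [CommMonoid M] (g : ℕ → M) (s : ℕ) (h : g s = g 0) :
    ∏ j ∈ Finset.range s, g (j + 1) = ∏ j ∈ Finset.range s, g j := by
  cases s with
  | zero => rfl
  | succ t => rw [Finset.prod_range_succ, h, Finset.prod_range_succ']

lemma coeff_one_add_C_mul_X_pow (a : ℂ) (n k : ℕ) :
    ((1 + C a * X) ^ n).coeff k = (n.choose k : ℂ) * a ^ k := by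
  rw [add_comm, add_pow, Polynomial.finset_sum_coeff]
  have hterm : ∀ i, ((C a * X) ^ i * 1 ^ (n - i) * (n.choose i : Polynomial ℂ)).coeff k
      = if k = i then (n.choose i : ℂ) * a ^ i else 0 := by
    intro i
    rw [one_pow, mul_one, mul_pow, ← C_pow, ← Polynomial.C_eq_natCast,
      Polynomial.coeff_mul_C, Polynomial.coeff_C_mul, Polynomial.coeff_X_pow]
    split_ifs <;> ring
  simp_rw [hterm]
  rw [Finset.sum_ite_eq]
  split_ifs with h
  · rfl
  · rw [Finset.mem_range, not_lt] at h
    rw [Nat.choose_eq_zero_of_lt (by omega)]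
    simp

lemma coeff_one_add_C_mul_X_pow_pow (c : ℂ) (s N : ℕ) (hs : 0 < s) (m : ℕ) :
    ((1 + C c * X ^ s) ^ N).coeff m
      = if s ∣ m then (N.choose (m / s) : ℂ) * c ^ (m / s) else 0 := by
  rw [add_comm, add_pow, Polynomial.finset_sum_coeff]
  have hterm : ∀ i, ((C c * X ^ s) ^ i * 1 ^ (N - i) * (N.choose i : Polynomial ℂ)).coeff m
      = if m = s * i then (N.choose i : ℂ) * c ^ i else 0 := by
    intro i
    rw [one_pow, mul_one, mul_pow, ← C_pow, ← pow_mul, ← Polynomial.C_eq_natCast,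
      Polynomial.coeff_mul_C, Polynomial.coeff_C_mul, Polynomial.coeff_X_pow]
    split_ifs <;> ring
  simp_rw [hterm]
  by_cases hdvd : s ∣ m
  · obtain ⟨q, rfl⟩ := hdvd
    have hq : s * q / s = q := Nat.mul_div_cancel_left _ hs
    rw [if_pos ⟨q, rfl⟩, hq]
    simp_rw [mul_right_inj' hs.ne']
    rw [Finset.sum_ite_eq]
    split_ifs with h
    · rfl
    · rw [Finset.mem_range, not_lt] at h
      rw [Nat.choose_eq_zero_of_lt (by omega)]
      simp
  · rw [if_neg hdvd]
    exact Finset.sum_eq_zero fun i _ => if_neg fun h => hdvd ⟨i, h⟩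

theorem sum_antidiagonalTuple_binomial_primitive_root
    (s N : ℕ) (hs : 0 < s) (hN : 0 < N) (ζ0 : ℂ) (hζ : IsPrimitiveRoot ζ0 s) (m : ℕ) :
    ∑ k ∈ Finset.Nat.antidiagonalTuple s m,
        ∏ j : Fin s, (N.choose (k j) : ℂ) * ζ0 ^ ((j.1 + 1) * k j) =
      if s ∣ m then (-1 : ℂ) ^ ((s + 1) * (m / s)) * (N.choose (m / s) : ℂ)
      else 0 := by
  haveI : NeZero s := ⟨hs.ne'⟩
  have hζ0 : ζ0 ≠ 0 := by
    intro h
    have := hζ.pow_eq_one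
    rw [h, zero_pow hs.ne'] at this
    exact one_ne_zero this.symm
  -- polynomial root product for a primitive root
  have Pgen : ∀ (η : ℂ), IsPrimitiveRoot η s →
      (X : Polynomial ℂ) ^ s - 1 = ∏ j ∈ Finset.range s, (X - C (η ^ j)) := by
    intro η hη
    rw [Polynomial.X_pow_sub_one_eq_prod hs hη]
    refine (Finset.prod_bij (fun j _ => η ^ j) ?_ ?_ ?_ ?_).symm
    · intro a _
      exact (Polynomial.mem_nthRootsFinset hs 1).2
        (by rw [← pow_mul, mul_comm, pow_mul, hη.pow_eq_one, one_pow])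
    · intro a ha b hb hab
      exact hη.pow_inj (Finset.mem_range.1 ha) (Finset.mem_range.1 hb) hab
    · intro z hz
      obtain ⟨i, hi, rfl⟩ := hη.eq_pow_of_pow_eq_one ((Polynomial.mem_nthRootsFinset hs 1).1 hz)
      exact ⟨i, Finset.mem_range.2 hi, rfl⟩
    · intro a _; rfl
  have Sgen : ∀ (η : ℂ), IsPrimitiveRoot η s → ∀ y : ℂ,
      ∏ j ∈ Finset.range s, (y - η ^ j) = y ^ s - 1 := by
    intro η hη y
    have := congrArg (Polynomial.eval y) (Pgen η hη)
    simpa [Polynomial.eval_prod] using this.symm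
  have S1 := Sgen ζ0 hζ
  have S1' := Sgen ζ0⁻¹ hζ.inv
  have hne : ((-1 : ℂ) ^ s) ≠ 0 := pow_ne_zero _ (by norm_num)
  -- product of the roots
  have Sroots : ∏ j ∈ Finset.range s, ζ0 ^ j = (-1 : ℂ) ^ (s + 1) := by
    have h0 := S1 0
    simp only [zero_sub, zero_pow hs.ne'] at h0
    have h1 : ∏ j ∈ Finset.range s, -(ζ0 ^ j)
        = (-1 : ℂ) ^ s * ∏ j ∈ Finset.range s, ζ0 ^ j := by
      rw [show (∏ j ∈ Finset.range s, -(ζ0 ^ j)) = ∏ j ∈ Finset.range s, (-1 : ℂ) * ζ0 ^ j from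
        Finset.prod_congr rfl fun j _ => by ring]
      rw [Finset.prod_mul_distrib, Finset.prod_const, Finset.card_range]
    rw [h1] at h0
    refine mul_left_cancel₀ hne ?_
    rw [h0, ← pow_add]
    exact (Odd.neg_one_pow ⟨s, by ring⟩).symm
  -- key scalar identity
  have Skey : ∀ x : ℂ, ∏ j ∈ Finset.range s, (1 + ζ0 ^ (j + 1) * x)
      = 1 + (-1 : ℂ) ^ (s + 1) * x ^ s := by
    intro x
    rw [prod_range_shift (fun j => 1 + ζ0 ^ j * x) s (by simp [hζ.pow_eq_one])]
    have hfac : ∀ j : ℕ, 1 + ζ0 ^ j * x = ζ0 ^ j * (x - -(ζ0⁻¹ ^ j)) := by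
      intro j
      rw [sub_neg_eq_add, mul_add, ← mul_pow, mul_inv_cancel₀ hζ0, one_pow]
      ring
    simp_rw [hfac]
    rw [Finset.prod_mul_distrib, Sroots]
    have hmain : ∏ j ∈ Finset.range s, (x - -(ζ0⁻¹ ^ j)) = x ^ s - (-1 : ℂ) ^ s := by
      have h2 := S1' (-x)
      have h3 : ∀ j : ℕ, -x - ζ0⁻¹ ^ j = (-1) * (x - -(ζ0⁻¹ ^ j)) := fun j => by ring
      rw [show (∏ j ∈ Finset.range s, (-x - ζ0⁻¹ ^ j)) =
          ∏ j ∈ Finset.range s, (-1 : ℂ) * (x - -(ζ0⁻¹ ^ j)) from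
        Finset.prod_congr rfl fun j _ => h3 j] at h2
      rw [Finset.prod_mul_distrib, Finset.prod_const, Finset.card_range, neg_pow x] at h2
      refine mul_left_cancel₀ hne ?_
      rw [h2]
      have hsq : (-1 : ℂ) ^ s * (-1 : ℂ) ^ s = 1 := by
        rw [← pow_add]; exact Even.neg_one_pow ⟨s, rfl⟩
      rw [mul_sub, hsq]
    rw [hmain, mul_sub, ← pow_add]
    have hodd : (-1 : ℂ) ^ (s + 1 + s) = -1 := Odd.neg_one_pow ⟨s, by ring⟩
    rw [hodd]
    ring
  -- polynomial identity
  have P2 : ∏ j ∈ Finset.range s, (1 + C (ζ0 ^ (j + 1)) * X)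
      = 1 + C ((-1 : ℂ) ^ (s + 1)) * X ^ s := by
    apply Polynomial.funext
    intro r
    rw [Polynomial.eval_prod]
    simp only [Polynomial.eval_add, Polynomial.eval_one, Polynomial.eval_mul,
      Polynomial.eval_C, Polynomial.eval_pow, Polynomial.eval_X]
    exact Skey r
  -- assemble
  have hL : (∏ j : Fin s, (1 + C (ζ0 ^ (j.1 + 1)) * X) ^ N).coeff m
      = ∑ k ∈ Finset.Nat.antidiagonalTuple s m,
          ∏ j : Fin s, (N.choose (k j) : ℂ) * ζ0 ^ ((j.1 + 1) * k j) := by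
    rw [coeff_prod_tuple]
    refine Finset.sum_congr rfl fun k _ => Finset.prod_congr rfl fun j _ => ?_
    rw [coeff_one_add_C_mul_X_pow, ← pow_mul]
  rw [← hL]
  have hprodpow : ∏ j : Fin s, (1 + C (ζ0 ^ (j.1 + 1)) * X) ^ N
      = (1 + C ((-1 : ℂ) ^ (s + 1)) * X ^ s) ^ N := by
    rw [Finset.prod_pow]
    congr 1
    rw [Fin.prod_univ_eq_prod_range (fun j => 1 + C (ζ0 ^ (j + 1)) * X) s]
    exact P2
  rw [hprodpow, coeff_one_add_C_mul_X_pow_pow _ _ _ hs]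
  split_ifs
  · rw [← pow_mul, mul_comm]
  · rfl
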